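/- Let I=(i_1,…,i_r) be a composition of n. A permutation σ ∈ S_n has a decreasing tree whose shape is the right comb of I if and only if σ, written as a word, factors as a concatenation σ = u_1 u_2 ⋯ u_r where each u_j is a strictly increasing word of length i_j whose last letter is greater than every letter appearing to its right in σ. -/

import Mathlib

/-- Unlabeled binary trees. -/
inductive BTree : Type
  | leaf : BTree
  | node : BTree → BTree → BTree
deriving DecidableEq

/-- Auxiliary, fuel-based computation of the shape of the decreasing tree of a word
with distinct letters: the root is the largest letter, and the left (resp. right)
subtree is the decreasing tree of the factor to its left (resp. right). -/
def decShapeAux : ℕ → List ℕ → BTree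
  | 0, _ => BTree.leaf
  | _, [] => BTree.leaf
  | fuel + 1, w =>
      let m := w.foldr max 0
      let k := w.idxOf m
      BTree.node (decShapeAux fuel (w.take k)) (decShapeAux fuel (w.drop (k + 1)))

/-- The shape of the decreasing tree of a word with distinct letters. -/
def decShape (w : List ℕ) : BTree := decShapeAux w.length w

/-- The left comb with `m` nodes: a chain where each node after the first is the
left child of the previous one. -/
def leftComb : ℕ → BTree
  | 0 => BTree.leaf
  | m + 1 => BTree.node (leftComb m) BTree.leaf

/-- The right comb of a composition `(i₁,…,i_r)`: a chain of `i₁` nodes going left,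
whose topmost node carries as right child the right comb of `(i₂,…,i_r)`. -/
def rightComb : List ℕ → BTree
  | [] => BTree.leaf
  | i :: J => BTree.node (leftComb (i - 1)) (rightComb J)

lemma decShapeAux_nil : ∀ fuel, decShapeAux fuel [] = BTree.leaf
  | 0 => rfl
  | _ + 1 => rfl

lemma le_foldrMax {x : ℕ} : ∀ {w : List ℕ}, x ∈ w → x ≤ w.foldr max 0
  | a :: w, h => by
    rcases List.mem_cons.mp h with rfl | h
    · exact le_max_left _ _
    · exact le_trans (le_foldrMax h) (le_max_right _ _)

lemma foldrMax_le {a : ℕ} : ∀ {w : List ℕ}, (∀ x ∈ w, x ≤ a) → w.foldr max 0 ≤ a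
  | [], _ => Nat.zero_le a
  | b :: w, h => by
    simp only [List.foldr_cons]
    exact max_le (h b (by simp)) (foldrMax_le fun x hx => h x (by simp [hx]))

lemma foldrMax_eq {a : ℕ} {w : List ℕ} (ha : a ∈ w) (h : ∀ x ∈ w, x ≤ a) :
    w.foldr max 0 = a :=
  le_antisymm (foldrMax_le h) (le_foldrMax ha)

lemma foldrMax_mem : ∀ {w : List ℕ}, w ≠ [] → w.foldr max 0 ∈ w := by
  intro w hne
  induction w with
  | nil => exact absurd rfl hne
  | cons a t ih =>
    simp only [List.foldr_cons]
    rcases le_total (t.foldr max 0) a with h | h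
    · simp [max_eq_left h]
    · rcases eq_or_ne t [] with rfl | hte
      · simp only [List.foldr_nil] at h ⊢
        interval_cases a <;> simp
      · rw [max_eq_right h]
        exact List.mem_cons_of_mem _ (ih hte)

lemma indexOf_append_cons {a : ℕ} {R : List ℕ} :
    ∀ {L : List ℕ}, a ∉ L → (L ++ a :: R).idxOf a = L.length
  | [], _ => by simp
  | b :: L, h => by
    have hba : b ≠ a := fun hh => h (hh ▸ (List.mem_cons_self (a := b) (l := L)))
    simp only [List.cons_append, List.length_cons]
    rw [List.idxOf_cons_ne _ hba, indexOf_append_cons (fun hh => h (List.mem_cons_of_mem _ hh))]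

lemma not_mem_take_indexOf (a : ℕ) : ∀ (l : List ℕ), a ∉ l.take (l.idxOf a)
  | [] => by simp
  | b :: l => by
    by_cases hba : b = a
    · subst hba; simp [List.idxOf_cons_self]
    · rw [List.idxOf_cons_ne _ hba]
      show a ∉ b :: l.take (l.idxOf a)
      simp only [List.mem_cons]
      push_neg
      exact ⟨Ne.symm hba, not_mem_take_indexOf a l⟩

def bsize : BTree → ℕ
  | .leaf => 0
  | .node l r => bsize l + bsize r + 1

lemma bsize_leftComb : ∀ m, bsize (leftComb m) = m
  | 0 => rfl
  | m + 1 => by simp [leftComb, bsize, bsize_leftComb m]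

lemma bsize_rightComb : ∀ I : List ℕ, (∀ i ∈ I, 0 < i) → bsize (rightComb I) = I.sum
  | [], _ => rfl
  | i :: J, h => by
    have hi := h i (by simp)
    simp only [rightComb, bsize, List.sum_cons, bsize_leftComb,
      bsize_rightComb J fun j hj => h j (List.mem_cons_of_mem _ hj)]
    omega

lemma bsize_decShapeAux : ∀ (fuel : ℕ) (w : List ℕ), w.length ≤ fuel →
    bsize (decShapeAux fuel w) = w.length
  | 0, w, hle => by
    rw [List.length_eq_zero_iff.mp (Nat.le_zero.mp hle)]
    rfl
  | fuel + 1, [], _ => rfl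
  | fuel + 1, a :: t, hle => by
    have hk : (a :: t).idxOf ((a :: t).foldr max 0) < t.length + 1 := by
      simpa using List.idxOf_lt_length_iff.mpr (foldrMax_mem (List.cons_ne_nil a t))
    simp only [List.length_cons] at hle
    simp only [decShapeAux, bsize]
    rw [bsize_decShapeAux fuel _ (by simp only [List.length_take, List.length_cons]; omega),
        bsize_decShapeAux fuel _ (by simp only [List.length_drop, List.length_cons]; omega)]
    simp only [List.length_take, List.length_drop, List.length_cons]
    omega

lemma decShapeAux_stable : ∀ (f1 f2 : ℕ) (w : List ℕ), w.length ≤ f1 → w.length ≤ f2 →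
    decShapeAux f1 w = decShapeAux f2 w
  | 0, f2, w, h1, _ => by
    rw [List.length_eq_zero_iff.mp (Nat.le_zero.mp h1), decShapeAux_nil, decShapeAux_nil]
  | f1 + 1, f2, [], _, _ => by rw [decShapeAux_nil, decShapeAux_nil]
  | f1 + 1, f2, a :: t, h1, h2 => by
    obtain ⟨f2', rfl⟩ : ∃ f2', f2 = f2' + 1 := by
      cases f2
      · simp at h2
      · exact ⟨_, rfl⟩
    have hk : (a :: t).idxOf ((a :: t).foldr max 0) < t.length + 1 := by
      simpa using List.idxOf_lt_length_iff.mpr (foldrMax_mem (List.cons_ne_nil a t))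
    simp only [List.length_cons] at h1 h2
    simp only [decShapeAux]
    rw [decShapeAux_stable f1 f2' _
          (by simp only [List.length_take, List.length_cons]; omega)
          (by simp only [List.length_take, List.length_cons]; omega),
        decShapeAux_stable f1 f2' ((a :: t).drop _)
          (by simp only [List.length_drop, List.length_cons]; omega)
          (by simp only [List.length_drop, List.length_cons]; omega)]

lemma decShapeAux_eq_decShape {fuel : ℕ} {w : List ℕ} (h : w.length ≤ fuel) :
    decShapeAux fuel w = decShape w :=
  decShapeAux_stable fuel w.length w h le_rfl

lemma bsize_decShape (w : List ℕ) : bsize (decShape w) = w.length :=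
  bsize_decShapeAux w.length w le_rfl

lemma decShape_eq_node {w : List ℕ} (hne : w ≠ []) :
    decShape w = BTree.node (decShape (w.take (w.idxOf (w.foldr max 0))))
      (decShape (w.drop (w.idxOf (w.foldr max 0) + 1))) := by
  obtain ⟨a, t, rfl⟩ := List.exists_cons_of_ne_nil hne
  have hk : (a :: t).idxOf ((a :: t).foldr max 0) < t.length + 1 := by
    simpa using List.idxOf_lt_length_iff.mpr (foldrMax_mem (List.cons_ne_nil a t))
  show decShapeAux (t.length + 1) _ = _
  simp only [decShapeAux]
  rw [decShapeAux_eq_decShape (by simp only [List.length_take, List.length_cons]; omega),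
      decShapeAux_eq_decShape (by simp only [List.length_drop, List.length_cons]; omega)]

lemma decShape_eq_leftComb : ∀ {L : List ℕ}, L.Pairwise (· < ·) → decShape L = leftComb L.length := by
  intro L
  induction L using List.reverseRecOn with
  | nil => intro _; rfl
  | append_singleton L a ih =>
    intro hp
    rw [List.pairwise_append] at hp
    obtain ⟨hpL, -, hlt⟩ := hp
    have hlt' : ∀ x ∈ L, x < a := fun x hx => hlt x hx a (by simp)
    have hmax : (L ++ [a]).foldr max 0 = a := by
      refine foldrMax_eq (by simp) ?_
      intro x hx
      rcases List.mem_append.mp hx with h | h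
      · exact le_of_lt (hlt' x h)
      · simp at h; omega
    have hanL : a ∉ L := fun h => lt_irrefl a (hlt' a h)
    have hidx : (L ++ [a]).idxOf a = L.length := indexOf_append_cons hanL
    rw [decShape_eq_node (by simp), hmax, hidx, List.take_left,
      List.drop_eq_nil_of_le (by simp)]
    rw [ih hpL]
    simp [leftComb, decShape, decShapeAux]

lemma pairwise_of_decShape_eq_leftComb : ∀ (n : ℕ) (L : List ℕ), L.length ≤ n →
    decShape L = leftComb L.length → L.Pairwise (· < ·)
  | 0, L, hle, _ => by
    rw [List.length_eq_zero_iff.mp (Nat.le_zero.mp hle)]; exact List.Pairwise.nil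
  | n + 1, L, hle, h => by
    rcases eq_or_ne L [] with rfl | hne
    · exact List.Pairwise.nil
    · have hmem : L.foldr max 0 ∈ L := foldrMax_mem hne
      have hk : L.idxOf (L.foldr max 0) < L.length := List.idxOf_lt_length_iff.mpr hmem
      rw [decShape_eq_node hne] at h
      obtain ⟨l', hl⟩ : ∃ l', L.length = l' + 1 := ⟨L.length - 1, by omega⟩
      rw [hl] at h
      simp only [leftComb] at h
      injection h with h1 h2
      have hdrop : L.drop (L.idxOf (L.foldr max 0) + 1) = [] := by
        have hb := bsize_decShape (L.drop (L.idxOf (L.foldr max 0) + 1))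
        rw [h2] at hb
        simp only [bsize] at hb
        exact List.length_eq_zero_iff.mp hb.symm
      have hdl : (L.drop (L.idxOf (L.foldr max 0) + 1)).length = 0 := by rw [hdrop]; rfl
      rw [List.length_drop] at hdl
      have hkl : L.idxOf (L.foldr max 0) = l' := by omega
      have hLdecomp : L = L.take (L.idxOf (L.foldr max 0)) ++ [L.foldr max 0] := by
        conv_lhs => rw [← List.take_append_drop (L.idxOf (L.foldr max 0)) L]
        congr 1
        rw [List.drop_eq_getElem_cons hk, hdrop]
        congr 1
        exact List.getElem_idxOf hk
      have htk : (L.take (L.idxOf (L.foldr max 0))).length = l' := by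
        rw [List.length_take]; omega
      have hP : (L.take (L.idxOf (L.foldr max 0))).Pairwise (· < ·) := by
        apply pairwise_of_decShape_eq_leftComb n _ (by omega)
        rw [htk]; exact h1
      have hltm : ∀ x ∈ L.take (L.idxOf (L.foldr max 0)), x < L.foldr max 0 := by
        intro x hx
        refine lt_of_le_of_ne (le_foldrMax (List.mem_of_mem_take hx)) ?_
        intro hh
        exact not_mem_take_indexOf (L.foldr max 0) L (hh ▸ hx)
      rw [hLdecomp, List.pairwise_append]
      exact ⟨hP, by simp, fun x hx y hy => by simp at hy; subst hy; exact hltm x hx⟩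

lemma decShape_eq_leftComb_iff {L : List ℕ} {j : ℕ} :
    decShape L = leftComb j ↔ L.Pairwise (· < ·) ∧ L.length = j := by
  constructor
  · intro h
    have hlen : L.length = j := by
      have hb := bsize_decShape L
      rw [h, bsize_leftComb] at hb
      omega
    exact ⟨pairwise_of_decShape_eq_leftComb L.length L le_rfl (hlen ▸ h), hlen⟩
  · rintro ⟨hp, rfl⟩
    exact decShape_eq_leftComb hp

lemma decShape_split {L R : List ℕ} {m : ℕ} (hL : ∀ x ∈ L, x ≤ m) (hR : ∀ x ∈ R, x ≤ m)
    (hmL : m ∉ L) : decShape (L ++ m :: R) = BTree.node (decShape L) (decShape R) := by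
  have hmax : (L ++ m :: R).foldr max 0 = m := by
    refine foldrMax_eq (by simp) ?_
    intro x hx
    rcases List.mem_append.mp hx with h | h
    · exact hL x h
    · rcases List.mem_cons.mp h with rfl | h
      · exact le_rfl
      · exact hR x h
  have hdropR : (L ++ m :: R).drop (L.length + 1) = R := by
    rw [show L ++ m :: R = (L ++ [m]) ++ R by simp]
    exact List.drop_left' (by simp)
  rw [decShape_eq_node (by simp), hmax, indexOf_append_cons hmL, List.take_left, hdropR]

lemma exists_split (w : List ℕ) (hne : w ≠ []) :
    ∃ L m R, w = L ++ m :: R ∧ m ∉ L ∧ (∀ x ∈ w, x ≤ m) ∧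
      decShape w = BTree.node (decShape L) (decShape R) := by
  have hmem : w.foldr max 0 ∈ w := foldrMax_mem hne
  have hk : w.idxOf (w.foldr max 0) < w.length := List.idxOf_lt_length_iff.mpr hmem
  refine ⟨w.take (w.idxOf (w.foldr max 0)), w.foldr max 0,
    w.drop (w.idxOf (w.foldr max 0) + 1), ?_, not_mem_take_indexOf _ _,
    fun x hx => le_foldrMax hx, decShape_eq_node hne⟩
  conv_lhs => rw [← List.take_append_drop (w.idxOf (w.foldr max 0)) w]
  congr 1
  rw [List.drop_eq_getElem_cons hk]
  congr 1
  exact List.getElem_idxOf hk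

lemma main_lemma : ∀ (I : List ℕ), (∀ i ∈ I, 0 < i) → ∀ (w : List ℕ), w.Nodup →
    I.sum = w.length →
    (decShape w = rightComb I ↔
      ∃ us : List (List ℕ), us.flatten = w ∧ us.map List.length = I ∧
        (∀ u ∈ us, u.Chain' (· < ·)) ∧
        (∀ j < us.length, ∀ l, (us.getD j []).getLast? = some l →
          ∀ x ∈ (us.drop (j + 1)).flatten, x < l))
  | [], _, w, _, hsum => by
    obtain rfl : w = [] := List.length_eq_zero_iff.mp (by simpa using hsum.symm)
    constructor
    · intro _
      exact ⟨[], rfl, rfl, by simp, by simp⟩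
    · intro _
      rfl
  | i :: J, hI, w, hnd, hsum => by
    have hi : 0 < i := hI i (by simp)
    have hJ : ∀ j ∈ J, 0 < j := fun j hj => hI j (List.mem_cons_of_mem _ hj)
    have hne : w ≠ [] := by
      intro h
      rw [h] at hsum
      simp only [List.sum_cons, List.length_nil] at hsum
      omega
    constructor
    · intro h
      obtain ⟨L, m, R, hdec, hmL, hmax, hsplit⟩ := exists_split w hne
      rw [hsplit] at h
      simp only [rightComb] at h
      injection h with h1 h2
      rw [decShape_eq_leftComb_iff] at h1
      obtain ⟨hPL, hlenL⟩ := h1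
      have hndR : R.Nodup ∧ m ∉ R := by
        rw [hdec] at hnd
        rcases List.nodup_append.mp hnd with ⟨-, h2', -⟩
        exact ⟨(List.nodup_cons.mp h2').2, (List.nodup_cons.mp h2').1⟩
      have hltL : ∀ x ∈ L, x < m := fun x hx =>
        lt_of_le_of_ne (hmax x (by rw [hdec]; exact List.mem_append_left _ hx))
          (fun hh => hmL (hh ▸ hx))
      have hltR : ∀ x ∈ R, x < m := fun x hx =>
        lt_of_le_of_ne (hmax x (by rw [hdec]; exact List.mem_append_right _ (List.mem_cons_of_mem _ hx)))
          (fun hh => hndR.2 (hh ▸ hx))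
      have hlenR : J.sum = R.length := by
        have hb := bsize_decShape R
        rw [h2, bsize_rightComb J hJ] at hb
        exact hb
      obtain ⟨vs, hvflat, hvlen, hvchain, hvdom⟩ :=
        (main_lemma J hJ R hndR.1 hlenR).mp h2
      refine ⟨(L ++ [m]) :: vs, ?_, ?_, ?_, ?_⟩
      · simp only [List.flatten_cons, hvflat, List.append_assoc, List.singleton_append]
        exact hdec.symm
      · simp only [List.map_cons, List.length_append, List.length_singleton, hvlen, hlenL]
        congr 1
        omega
      · intro u hu
        rcases List.mem_cons.mp hu with rfl | hu
        · show List.IsChain (· < ·) (L ++ [m])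
          rw [List.isChain_iff_pairwise, List.pairwise_append]
          exact ⟨hPL, by simp, fun x hx y hy => by simp at hy; subst hy; exact hltL x hx⟩
        · exact hvchain u hu
      · intro j hj l hl x hx
        cases j with
        | zero =>
          simp only [List.getD_cons_zero, List.getLast?_concat, Option.some.injEq] at hl
          subst hl
          simp only [List.drop_succ_cons, List.drop_zero] at hx
          rw [hvflat] at hx
          exact hltR x hx
        | succ j' =>
          simp only [List.length_cons, Nat.succ_lt_succ_iff] at hj
          simp only [List.getD_cons_succ] at hl
          simp only [List.drop_succ_cons] at hx
          exact hvdom j' hj l hl x hx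
    · rintro ⟨us, hflat, hlen, hchain, hdom⟩
      rcases us with _ | ⟨u, vs⟩
      · simp at hlen
      simp only [List.map_cons, List.cons.injEq] at hlen
      obtain ⟨hlu, hlvs⟩ := hlen
      have hune : u ≠ [] := by
        intro h
        rw [h] at hlu
        simp at hlu
        omega
      have hu_pair : u.Pairwise (· < ·) := List.isChain_iff_pairwise.mp (hchain u (by simp))
      have hu_eq : u.dropLast ++ [u.getLast hune] = u := List.dropLast_append_getLast hune
      have hdl_lt : ∀ x ∈ u.dropLast, x < u.getLast hune := by
        have hp : (u.dropLast ++ [u.getLast hune]).Pairwise (· < ·) := by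
          rw [hu_eq]; exact hu_pair
        rw [List.pairwise_append] at hp
        exact fun x hx => hp.2.2 x hx _ (by simp)
      have hlastmax_u : ∀ x ∈ u, x ≤ u.getLast hune := by
        intro x hx
        rw [← hu_eq] at hx
        rcases List.mem_append.mp hx with h | h
        · exact le_of_lt (hdl_lt x h)
        · simp at h; omega
      have hdom0 : ∀ x ∈ vs.flatten, x < u.getLast hune := by
        intro x hx
        refine hdom 0 (by simp) (u.getLast hune) ?_ x ?_
        · simp only [List.getD_cons_zero]
          exact List.getLast?_eq_getLast hune
        · simpa using hx
      have hdecomp : w = u.dropLast ++ u.getLast hune :: vs.flatten := by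
        rw [← hflat]
        simp only [List.flatten_cons]
        conv_lhs => rw [← hu_eq]
        simp
      have hnotmem : u.getLast hune ∉ u.dropLast := fun h => lt_irrefl _ (hdl_lt _ h)
      have hndR : vs.flatten.Nodup := by
        rw [hdecomp] at hnd
        rcases List.nodup_append.mp hnd with ⟨-, h2', -⟩
        exact (List.nodup_cons.mp h2').2
      have hlenR : J.sum = vs.flatten.length := by
        rw [List.length_flatten, hlvs]
      have hvdom : ∀ j < vs.length, ∀ l, (vs.getD j []).getLast? = some l →
          ∀ x ∈ (vs.drop (j + 1)).flatten, x < l := by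
        intro j hj l hl x hx
        refine hdom (j + 1) (by simp; omega) l ?_ x ?_
        · simpa only [List.getD_cons_succ] using hl
        · simpa only [List.drop_succ_cons] using hx
      have h2 : decShape vs.flatten = rightComb J :=
        (main_lemma J hJ vs.flatten hndR hlenR).mpr
          ⟨vs, rfl, hlvs, fun v hv => hchain v (List.mem_cons_of_mem _ hv), hvdom⟩
      have h1 : decShape u.dropLast = leftComb (i - 1) := by
        rw [decShape_eq_leftComb_iff]
        refine ⟨hu_pair.sublist (List.dropLast_sublist u), ?_⟩
        rw [List.length_dropLast, hlu]
      rw [hdecomp, decShape_split (fun x hx => hlastmax_u x (List.mem_of_mem_dropLast hx))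
        (fun x hx => le_of_lt (hdom0 x hx)) hnotmem]
      simp only [rightComb, h1, h2]

/-- A permutation (word) `w` of `{1,…,n}` has decreasing tree of shape the right comb
of a composition `I = (i₁,…,i_r)` of `n` iff `w` factors as `u₁u₂⋯u_r` where each `u_j`
is strictly increasing of length `i_j` and its last letter is greater than every
letter to its right in `w`. -/
theorem decShape_eq_rightComb_iff (n : ℕ) (I : List ℕ) (hI : ∀ i ∈ I, 0 < i)
    (hsum : I.sum = n) (w : List ℕ) (hw : w.Perm ((List.range n).map (· + 1))) :
    decShape w = rightComb I ↔
      ∃ us : List (List ℕ), us.flatten = w ∧ us.map List.length = I ∧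
        (∀ u ∈ us, u.Chain' (· < ·)) ∧
        (∀ j < us.length, ∀ l, (us.getD j []).getLast? = some l →
          ∀ x ∈ (us.drop (j + 1)).flatten, x < l) := by
  have hnd : w.Nodup :=
    hw.symm.nodup ((List.nodup_range).map (fun a b h => by omega))
  have hlen : w.length = n := by simpa using hw.length_eq
  exact main_lemma I hI w hnd (by rw [hsum, hlen])
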